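/- Let x be a solution of (E) with x(t) ≥ 0 and x′(t) ≥ 0 for all t ≥ τ. Then for every k, every n ∈ ℕ, and every s ∈ [t_k, ζ_k], x′(s) ≥ (1/r(s))·( φ(x(ζ_k))·∫_{ζ_k}^{t_{k+1}} p(u) du + Σ_{j=k+1}^{k+1+n} φ(x(ζ_j))·∫_{t_j}^{t_{j+1}} p(u) du ). -/

import Mathlib

open MeasureTheory Set Filter

theorem stmt13
    (t ζ : ℕ → ℝ) (ht_mono : StrictMono t)
    (ht_top : Tendsto t atTop atTop)
    (hζ : ∀ k : ℕ, ζ k ∈ Icc (t k) (t (k+1)))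
    (r : ℝ → ℝ) (hr_cont : ContinuousOn r (Ici (t 0)))
    (hr_pos : ∀ s ∈ Ici (t 0), 0 < r s)
    (f : ℝ → ℝ → ℝ)
    (hf_cont : ContinuousOn (fun q : ℝ × ℝ => f q.1 q.2) ((Ici (t 0)) ×ˢ (univ : Set ℝ)))
    (hf_sign : ∀ s ∈ Ici (t 0), ∀ y : ℝ, y ≠ 0 → 0 < y * f s y)
    (x x' : ℝ → ℝ)
    (hx_deriv : ∀ s ∈ Ici (t 0), HasDerivAt x (x' s) s)
    (hx'_cont : ContinuousOn x' (Ici (t 0)))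
    (hE : ∀ k : ℕ, ∀ s ∈ Ioo (t k) (t (k+1)),
      HasDerivAt (fun u => r u * x' u) (-(f s (x (ζ k)))) s)
    (p : ℝ → ℝ) (hp_cont : ContinuousOn p (Ici (t 0)))
    (hp_nonneg : ∀ s ∈ Ici (t 0), 0 ≤ p s)
    (φ : ℝ → ℝ) (hφ_smooth : ContDiff ℝ 1 φ) (hφ_mono : Monotone φ)
    (hφ_sign : ∀ y : ℝ, y ≠ 0 → 0 < y * φ y)
    (hfp_pos : ∀ s ∈ Ici (t 0), ∀ y : ℝ, 0 < y → p s * φ y ≤ f s y)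
    (hfp_neg : ∀ s ∈ Ici (t 0), ∀ y : ℝ, y < 0 → f s y ≤ p s * φ y)
    (hx_nonneg : ∀ s ∈ Ici (t 0), 0 ≤ x s)
    (hx'_nonneg : ∀ s ∈ Ici (t 0), 0 ≤ x' s) :
    ∀ k n : ℕ, ∀ s ∈ Icc (t k) (ζ k),
      (1 / r s) * (φ (x (ζ k)) * (∫ u in ζ k..t (k+1), p u) +
        ∑ j ∈ Finset.Icc (k+1) (k+1+n), φ (x (ζ j)) * ∫ u in t j..t (j+1), p u)
      ≤ x' s := by
  intro k n s hs
  have htle : ∀ {i j : ℕ}, i ≤ j → t i ≤ t j := fun h => ht_mono.monotone h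
  have ht0 : ∀ j : ℕ, t 0 ≤ t j := fun j => htle (Nat.zero_le j)
  have hζIci : ∀ j : ℕ, ζ j ∈ Ici (t 0) := fun j => le_trans (ht0 j) (hζ j).1
  have hs0 : t 0 ≤ s := le_trans (ht0 k) hs.1
  have hsζ : s ≤ ζ k := hs.2
  have hstk1 : s ≤ t (k+1) := le_trans hsζ (hζ k).2
  have hposmul : ∀ a b : ℝ, 0 < a → 0 < a * b → 0 < b := by
    intro a b ha hab; nlinarith
  have hnegmul : ∀ a b : ℝ, a < 0 → 0 < a * b → b < 0 := by
    intro a b ha hab; nlinarith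
  -- φ 0 = 0
  have hseq : Tendsto (fun n : ℕ => (1 : ℝ) / (n + 1)) atTop (nhds 0) :=
    tendsto_one_div_add_atTop_nhds_zero_nat
  have hφ0 : φ 0 = 0 := by
    have hc : Continuous φ := hφ_smooth.continuous
    have h1 : 0 ≤ φ 0 := by
      have ht1 : Tendsto (fun n : ℕ => φ (1 / (n + 1))) atTop (nhds (φ 0)) :=
        (hc.tendsto 0).comp hseq
      exact ge_of_tendsto' ht1 fun m => le_of_lt
        (hposmul _ _ (by positivity) (hφ_sign (1 / (m + 1 : ℝ)) (by positivity)))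
    have h2 : φ 0 ≤ 0 := by
      have hseq' : Tendsto (fun n : ℕ => -((1 : ℝ) / (n + 1))) atTop (nhds 0) := by
        have := hseq.neg; rwa [neg_zero] at this
      have ht2 : Tendsto (fun n : ℕ => φ (-(1 / (n + 1)))) atTop (nhds (φ 0)) :=
        (hc.tendsto 0).comp hseq'
      refine le_of_tendsto' ht2 fun m => le_of_lt ?_
      have hlt : -((1 : ℝ) / (m + 1)) < 0 := by
        have : (0:ℝ) < 1 / (m + 1) := by positivity
        linarith
      exact hnegmul _ _ hlt (hφ_sign _ hlt.ne)
    linarith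
  -- continuity facts
  have hfc_cont : ∀ c : ℝ, ContinuousOn (fun u => f u c) (Ici (t 0)) := fun c =>
    hf_cont.comp ((continuous_id.prodMk continuous_const).continuousOn) (fun u hu => ⟨hu, trivial⟩)
  have hfy_cont : ∀ u ∈ Ici (t 0), Continuous (fun y => f u y) := by
    intro u hu
    rw [← continuousOn_univ]
    exact hf_cont.comp ((continuous_const.prodMk continuous_id).continuousOn) (fun y _ => ⟨hu, trivial⟩)
  have hf0 : ∀ u ∈ Ici (t 0), 0 ≤ f u 0 := by
    intro u hu
    have ht1 : Tendsto (fun n : ℕ => f u (1 / (n + 1))) atTop (nhds (f u 0)) :=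
      ((hfy_cont u hu).tendsto 0).comp hseq
    exact ge_of_tendsto' ht1 fun m => le_of_lt
      (hposmul _ _ (by positivity) (hf_sign u hu (1 / (m + 1 : ℝ)) (by positivity)))
  -- pointwise bounds
  have hxζ_nonneg : ∀ j : ℕ, 0 ≤ x (ζ j) := fun j => hx_nonneg _ (hζIci j)
  have hφxζ : ∀ j : ℕ, 0 ≤ φ (x (ζ j)) := fun j => hφ0 ▸ hφ_mono (hxζ_nonneg j)
  have hfb : ∀ (j : ℕ) (u : ℝ), u ∈ Ici (t 0) → p u * φ (x (ζ j)) ≤ f u (x (ζ j)) := by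
    intro j u hu
    rcases (hxζ_nonneg j).eq_or_lt with h | h
    · rw [← h, hφ0, mul_zero]; exact hf0 u hu
    · exact hfp_pos u hu _ h
  have hf_nonneg : ∀ (j : ℕ) (u : ℝ), u ∈ Ici (t 0) → 0 ≤ f u (x (ζ j)) := fun j u hu =>
    le_trans (mul_nonneg (hp_nonneg u hu) (hφxζ j)) (hfb j u hu)
  -- integrability
  have hIcc_sub : ∀ {a b : ℝ}, t 0 ≤ a → Icc a b ⊆ Ici (t 0) := fun h u hu => le_trans h hu.1
  have hInt_f : ∀ (j : ℕ) (a b : ℝ), t 0 ≤ a → a ≤ b →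
      IntervalIntegrable (fun u => f u (x (ζ j))) volume a b := fun j a b h hab =>
    ((hfc_cont _).mono (by rw [uIcc_of_le hab]; exact hIcc_sub h)).intervalIntegrable
  have hInt_p : ∀ (a b : ℝ), t 0 ≤ a → a ≤ b → IntervalIntegrable p volume a b :=
    fun a b h hab =>
      (hp_cont.mono (by rw [uIcc_of_le hab]; exact hIcc_sub h)).intervalIntegrable
  -- FTC on each piece
  have hG_cont : ContinuousOn (fun u => r u * x' u) (Ici (t 0)) := hr_cont.mul hx'_cont
  have hG_nonneg : ∀ u ∈ Ici (t 0), 0 ≤ r u * x' u := fun u hu =>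
    mul_nonneg (hr_pos u hu).le (hx'_nonneg u hu)
  have FTC : ∀ (j : ℕ) (a : ℝ), t j ≤ a → a ≤ t (j+1) →
      (∫ u in a..t (j+1), f u (x (ζ j))) = r a * x' a - r (t (j+1)) * x' (t (j+1)) := by
    intro j a ha hab
    have h0a : t 0 ≤ a := le_trans (ht0 j) ha
    have key : (∫ u in a..t (j+1), -(f u (x (ζ j)))) =
        r (t (j+1)) * x' (t (j+1)) - r a * x' a :=
      intervalIntegral.integral_eq_sub_of_hasDeriv_right_of_le hab
        (hG_cont.mono (hIcc_sub h0a))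
        (fun u hu => ((hE j u ⟨lt_of_le_of_lt ha hu.1, hu.2⟩).hasDerivWithinAt))
        ((hInt_f j a (t (j+1)) h0a hab).neg)
    rw [intervalIntegral.integral_neg] at key
    linarith
  -- main telescoping equality
  have main : ∀ m : ℕ,
      (∫ u in s..t (k+1), f u (x (ζ k))) +
        ∑ j ∈ Finset.Icc (k+1) (k+1+m), (∫ u in t j..t (j+1), f u (x (ζ j))) =
      r s * x' s - r (t (k+1+m+1)) * x' (t (k+1+m+1)) := by
    intro m
    induction m with
    | zero =>
      simp only [Nat.add_zero, Finset.Icc_self, Finset.sum_singleton]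
      rw [FTC k s hs.1 hstk1, FTC (k+1) (t (k+1)) le_rfl (htle (Nat.le_succ _))]
      ring
    | succ m ih =>
      rw [show k+1+(m+1) = (k+1+m)+1 from rfl,
        Finset.sum_Icc_succ_top (by omega : k+1 ≤ k+1+m+1), ← add_assoc, ih,
        FTC (k+1+m+1) (t (k+1+m+1)) le_rfl (htle (Nat.le_succ _))]
      ring
  -- bound each term by the f-integral
  have term_j : ∀ j : ℕ,
      φ (x (ζ j)) * (∫ u in t j..t (j+1), p u) ≤ ∫ u in t j..t (j+1), f u (x (ζ j)) := by
    intro j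
    rw [← intervalIntegral.integral_const_mul]
    refine intervalIntegral.integral_mono_on (htle (Nat.le_succ j))
      ((hInt_p (t j) (t (j+1)) (ht0 j) (htle (Nat.le_succ j))).const_mul _)
      (hInt_f j (t j) (t (j+1)) (ht0 j) (htle (Nat.le_succ j))) ?_
    intro u hu
    rw [mul_comm]
    exact hfb j u (hIcc_sub (ht0 j) hu)
  have hζ0 : t 0 ≤ ζ k := hζIci k
  have split : (∫ u in s..t (k+1), f u (x (ζ k))) =
      (∫ u in s..ζ k, f u (x (ζ k))) + ∫ u in ζ k..t (k+1), f u (x (ζ k)) :=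
    (intervalIntegral.integral_add_adjacent_intervals (hInt_f k s (ζ k) hs0 hsζ)
      (hInt_f k (ζ k) (t (k+1)) hζ0 (hζ k).2)).symm
  have h1 : 0 ≤ ∫ u in s..ζ k, f u (x (ζ k)) :=
    intervalIntegral.integral_nonneg hsζ (fun u hu => hf_nonneg k u (hIcc_sub hs0 hu))
  have term_k : φ (x (ζ k)) * (∫ u in ζ k..t (k+1), p u) ≤
      ∫ u in s..t (k+1), f u (x (ζ k)) := by
    rw [split]
    have h2 : φ (x (ζ k)) * (∫ u in ζ k..t (k+1), p u) ≤
        ∫ u in ζ k..t (k+1), f u (x (ζ k)) := by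
      rw [← intervalIntegral.integral_const_mul]
      refine intervalIntegral.integral_mono_on (hζ k).2
        ((hInt_p (ζ k) (t (k+1)) hζ0 (hζ k).2).const_mul _)
        (hInt_f k (ζ k) (t (k+1)) hζ0 (hζ k).2) ?_
      intro u hu
      rw [mul_comm]
      exact hfb k u (hIcc_sub hζ0 hu)
    linarith
  -- finish
  rw [one_div, inv_mul_le_iff₀ (hr_pos s hs0)]
  have sum_le : ∑ j ∈ Finset.Icc (k+1) (k+1+n), φ (x (ζ j)) * ∫ u in t j..t (j+1), p u ≤
      ∑ j ∈ Finset.Icc (k+1) (k+1+n), ∫ u in t j..t (j+1), f u (x (ζ j)) :=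
    Finset.sum_le_sum fun j _ => term_j j
  have hGend : 0 ≤ r (t (k+1+n+1)) * x' (t (k+1+n+1)) := hG_nonneg _ (ht0 _)
  have hmain := main n
  linarith [add_le_add term_k sum_le]
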